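/- Let ℓ : ℝ → ℝ be convex and differentiable and σ : ℝ → ℝ satisfy σ(z) = 0 for all z ≤ 0. Let (x_i, y_i)_{i=1}^n be a dataset with all x_i of the form (x_i^{(1)},...,x_i^{(d-1)}, 1) (last coordinate 1) and ‖x_i‖ ≤ K for all i. Fix weight vectors w_j* with unit-norm first d-1 coordinates and last coordinate -(K+1), so ⟨w_j*, x_i⟩ ≤ -1 for all i, j. Set a_j* arbitrary for j ≥ 1 and a₀* = argmin_a ∑_i ℓ(-y_i a). Then θ* = (a₀*, a_1*,...,a_M*, w_1*,...,w_M*) is a local minimum of the empirical loss L(θ) = (1/n)∑_i ℓ(-y_i(a₀ + ∑_j a_j σ(⟨w_j, x_i⟩))): there exists ε > 0 such that for all perturbations with ∑_j ‖Δw_j‖ ≤ ε and arbitrary Δa₀, Δa_j, the loss does not decrease. At θ*, f(x_i; θ*) = a₀* is constant, so if the dataset contains both labels, the training error at θ* is at least min(n₊, n₋)/n > 0. -/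
import Mathlib

lemma cs_aux {ι : Type*} (s : Finset ι) (f g : ι → ℝ) :
    ∑ i ∈ s, f i * g i ≤ Real.sqrt (∑ i ∈ s, f i ^ 2) * Real.sqrt (∑ i ∈ s, g i ^ 2) := by
  calc ∑ i ∈ s, f i * g i ≤ |∑ i ∈ s, f i * g i| := le_abs_self _
    _ = Real.sqrt ((∑ i ∈ s, f i * g i) ^ 2) := (Real.sqrt_sq_eq_abs _).symm
    _ ≤ Real.sqrt ((∑ i ∈ s, f i ^ 2) * ∑ i ∈ s, g i ^ 2) :=
        Real.sqrt_le_sqrt (Finset.sum_mul_sq_le_sq_mul_sq s f g)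
    _ = _ := Real.sqrt_mul (by positivity) _

open Classical in
/-- ReLU-class counterexample (dead neurons): with all pre-activations at most `-1`,
the constructed point is a local minimum of the empirical loss whose network output is
the constant `a₀*`; if both labels are present its training error is at least
`min(n₊, n₋)/n`. -/
theorem dead_relu_local_min
    (d n M : ℕ) (K : ℝ)
    (x : Fin n → Fin (d + 1) → ℝ) (y : Fin n → ℝ)
    (hy : ∀ i, y i = 1 ∨ y i = -1)
    (hlast : ∀ i, x i (Fin.last d) = 1)
    (hK : ∀ i, Real.sqrt (∑ k, (x i k) ^ 2) ≤ K)
    (ℓ : ℝ → ℝ) (hconv : ConvexOn ℝ Set.univ ℓ) (hdiff : Differentiable ℝ ℓ)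
    (σ : ℝ → ℝ) (hσ : ∀ z : ℝ, z ≤ 0 → σ z = 0)
    (w : Fin M → Fin (d + 1) → ℝ)
    (hwnorm : ∀ j, Real.sqrt (∑ k : Fin d, (w j (Fin.castSucc k)) ^ 2) = 1)
    (hwlast : ∀ j, w j (Fin.last d) = -(K + 1))
    (a : Fin M → ℝ) (a0s : ℝ)
    (ha0 : ∀ b : ℝ, ∑ i, ℓ (-(y i) * a0s) ≤ ∑ i, ℓ (-(y i) * b)) :
    (∀ i, a0s + ∑ j, a j * σ (∑ k, w j k * x i k) = a0s) ∧
    (∃ ε > (0 : ℝ), ∀ (Δa0 : ℝ) (Δa : Fin M → ℝ) (Δw : Fin M → Fin (d + 1) → ℝ),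
      (∑ j, Real.sqrt (∑ k, (Δw j k) ^ 2)) ≤ ε →
      ∑ i, ℓ (-(y i) * a0s) ≤
      ∑ i, ℓ (-(y i) * ((a0s + Δa0) +
        ∑ j, (a j + Δa j) * σ (∑ k, (w j k + Δw j k) * x i k)))) ∧
    ((∃ i, y i = 1) → (∃ i, y i = -1) →
      (min ((Finset.univ.filter (fun i => y i = 1)).card : ℝ)
           ((Finset.univ.filter (fun i => y i = -1)).card : ℝ)) / (n : ℝ) ≤
      (1 / (n : ℝ)) * ∑ i,
        (if y i ≠ (if 0 ≤ a0s + ∑ j, a j * σ (∑ k, w j k * x i k)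
                   then (1 : ℝ) else -1) then (1 : ℝ) else 0)) := by
  -- key: pre-activations are ≤ -1
  have hxcs : ∀ i, Real.sqrt (∑ k : Fin d, (x i (Fin.castSucc k)) ^ 2) ≤ K := by
    intro i
    refine le_trans (Real.sqrt_le_sqrt ?_) (hK i)
    rw [Fin.sum_univ_castSucc]
    nlinarith [sq_nonneg (x i (Fin.last d))]
  have hpre : ∀ i j, ∑ k, w j k * x i k ≤ -1 := by
    intro i j
    rw [Fin.sum_univ_castSucc, hwlast, hlast]
    have h1 : ∑ k : Fin d, w j (Fin.castSucc k) * x i (Fin.castSucc k) ≤ K := by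
      calc _ ≤ Real.sqrt (∑ k : Fin d, (w j (Fin.castSucc k)) ^ 2) *
              Real.sqrt (∑ k : Fin d, (x i (Fin.castSucc k)) ^ 2) := cs_aux _ _ _
        _ ≤ K := by rw [hwnorm]; simpa using hxcs i
    linarith
  have hout : ∀ i, a0s + ∑ j, a j * σ (∑ k, w j k * x i k) = a0s := by
    intro i
    have : ∀ j : Fin M, a j * σ (∑ k, w j k * x i k) = 0 := fun j => by
      rw [hσ _ (le_trans (hpre i j) (by norm_num)), mul_zero]
    simp [this]
  refine ⟨hout, ?_, ?_⟩
  · -- local minimum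
    refine ⟨1 / (max K 0 + 1), by positivity, fun Δa0 Δa Δw hΔ => ?_⟩
    have hpert : ∀ i, -(y i) * ((a0s + Δa0) +
        ∑ j, (a j + Δa j) * σ (∑ k, (w j k + Δw j k) * x i k))
        = -(y i) * (a0s + Δa0) := by
      intro i
      have hzero : ∀ j : Fin M, (a j + Δa j) * σ (∑ k, (w j k + Δw j k) * x i k) = 0 := by
        intro j
        have hεj : Real.sqrt (∑ k, (Δw j k) ^ 2) ≤ 1 / (max K 0 + 1) := by
          refine le_trans ?_ hΔ
          exact Finset.single_le_sum (f := fun j => Real.sqrt (∑ k, (Δw j k) ^ 2))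
            (fun j _ => Real.sqrt_nonneg _) (Finset.mem_univ j)
        have hΔx : ∑ k, Δw j k * x i k ≤ K / (max K 0 + 1) := by
          calc ∑ k, Δw j k * x i k ≤ Real.sqrt (∑ k, (Δw j k) ^ 2) *
                Real.sqrt (∑ k, (x i k) ^ 2) := cs_aux _ _ _
            _ ≤ (1 / (max K 0 + 1)) * K := by
                apply mul_le_mul hεj (hK i) (Real.sqrt_nonneg _) (by positivity)
            _ = K / (max K 0 + 1) := by ring
        have hK1 : K / (max K 0 + 1) ≤ 1 := by
          rw [div_le_one (by positivity)]
          have := le_max_left K (0:ℝ)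
          linarith
        have : ∑ k, (w j k + Δw j k) * x i k ≤ 0 := by
          have hsplit : ∑ k, (w j k + Δw j k) * x i k
              = (∑ k, w j k * x i k) + ∑ k, Δw j k * x i k := by
            rw [← Finset.sum_add_distrib]; congr 1; ext k; ring
          rw [hsplit]
          have := hpre i j
          linarith
        rw [hσ _ this, mul_zero]
      simp [hzero]
    calc ∑ i, ℓ (-(y i) * a0s) ≤ ∑ i, ℓ (-(y i) * (a0s + Δa0)) := ha0 _
      _ = _ := by apply Finset.sum_congr rfl; intro i _; rw [hpert i]
  · -- training error bound
    intro ⟨ip, hip⟩ ⟨im, him⟩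
    have hn : (0:ℝ) < n := by
      have : 0 < n := Fin.pos_iff_nonempty.mpr ⟨ip⟩
      exact_mod_cast this
    set p : ℝ := if 0 ≤ a0s then (1:ℝ) else -1 with hp
    have hifeq : ∀ i : Fin n,
        (if y i ≠ (if 0 ≤ a0s + ∑ j, a j * σ (∑ k, w j k * x i k)
          then (1 : ℝ) else -1) then (1 : ℝ) else 0)
        = (if y i ≠ p then (1:ℝ) else 0) := by
      intro i; rw [hout i]
    rw [Finset.sum_congr rfl (fun i _ => hifeq i)]
    have key : min ((Finset.univ.filter (fun i => y i = 1)).card : ℝ)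
        ((Finset.univ.filter (fun i => y i = -1)).card : ℝ)
        ≤ ∑ i, (if y i ≠ p then (1:ℝ) else 0) := by
      by_cases h0 : 0 ≤ a0s
      · -- p = 1, all negatives are errors
        have hp1 : p = 1 := by simp [hp, h0]
        refine le_trans (min_le_right _ _) ?_
        rw [← Finset.sum_boole]
        apply Finset.sum_le_sum
        intro i _
        by_cases hyi : y i = -1
        · norm_num [hyi, hp1]
        · simp [hyi]; split <;> norm_num
      · have hp1 : p = -1 := by simp [hp, h0]
        refine le_trans (min_le_left _ _) ?_
        rw [← Finset.sum_boole]
        apply Finset.sum_le_sum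
        intro i _
        by_cases hyi : y i = 1
        · norm_num [hyi, hp1]
        · simp [hyi]; split <;> norm_num
    calc _ = (1 / (n:ℝ)) * (min ((Finset.univ.filter (fun i => y i = 1)).card : ℝ)
          ((Finset.univ.filter (fun i => y i = -1)).card : ℝ)) := by ring
      _ ≤ _ := mul_le_mul_of_nonneg_left key (by positivity)
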